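/- Let g be C^{M+1} on [t_0, t_M] where t_m = t_0 + mh are uniform nodes, and ψ_m = g(t_m). Then for each 0 ≤ s ≤ M, the discrete derivative vectors d̂_s ψ satisfy ‖d̂_s ψ‖_∞ ≤ C_s for constants C_s depending on sup-norms of derivatives of g up to order M+1 but not on h; i.e., the discrete data set (t⃗, ψ⃗) possesses M degrees of smoothness in the sense of bounded (Ŝ,∞)-Sobolev norm as h → 0. -/

import Mathlib

open Finset

private lemma aux_iter_deriv_polyeval (p : Polynomial ℝ) (s : ℕ) :
    deriv^[s] (fun t => p.eval t) = fun t => ((⇑Polynomial.derivative)^[s] p).eval t := by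
  induction s generalizing p with
  | zero => rfl
  | succ n ih =>
    rw [Function.iterate_succ_apply, Function.iterate_succ_apply]
    have hd : deriv (fun t => p.eval t) = fun t => (Polynomial.derivative p).eval t := by
      funext t; exact Polynomial.deriv (p := p)
    rw [hd, ih]

private lemma aux_iter_deriv_polyeval' (p : Polynomial ℝ) (s : ℕ) (x : ℝ) :
    deriv^[s] (fun t => p.eval t) x = ((⇑Polynomial.derivative)^[s] p).eval x := by
  rw [aux_iter_deriv_polyeval]

private lemma aux_iter_derivative_comp (a b : ℝ) (s : ℕ) (q : Polynomial ℝ) :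
    (⇑Polynomial.derivative)^[s] (q.comp (Polynomial.C a * (Polynomial.X - Polynomial.C b))) =
      Polynomial.C (a ^ s) *
        (((⇑Polynomial.derivative)^[s] q).comp
          (Polynomial.C a * (Polynomial.X - Polynomial.C b))) := by
  induction s generalizing q with
  | zero => simp
  | succ n ih =>
    rw [Function.iterate_succ_apply,
      Function.iterate_succ_apply (f := ⇑Polynomial.derivative) (n := n) (x := q),
      Polynomial.derivative_comp]
    have hder : Polynomial.derivative (Polynomial.C a * (Polynomial.X - Polynomial.C b)) =
        Polynomial.C a := by simp
    rw [hder, Polynomial.iterate_derivative_C_mul, ih (Polynomial.derivative q),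
      ← mul_assoc, ← Polynomial.C_mul, pow_succ, mul_comm a (a ^ n)]

private lemma aux_taylor_poly (g : ℝ → ℝ) (sset : Set ℝ) (x₀ : ℝ) (n : ℕ) (x : ℝ) :
    (∑ k ∈ Finset.range (n + 1),
        Polynomial.C (iteratedDerivWithin k g sset x₀ * ((Nat.factorial k : ℕ) : ℝ)⁻¹) *
          (Polynomial.X - Polynomial.C x₀) ^ k).eval x
      = taylorWithinEval g n sset x₀ x := by
  induction n with
  | zero => simp
  | succ n ih =>
    rw [Finset.sum_range_succ, Polynomial.eval_add, ih, taylorWithinEval_succ]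
    simp only [Polynomial.eval_mul, Polynomial.eval_C, Polynomial.eval_pow,
      Polynomial.eval_sub, Polynomial.eval_X, smul_eq_mul, Nat.factorial_succ,
      Nat.cast_mul, Nat.cast_add, Nat.cast_one]
    ring

private lemma aux_iterDW (g : ℝ → ℝ) (N : ℕ) (hg : ContDiff ℝ (N : ℕ) g) {a b : ℝ}
    (hab : a < b) :
    ∀ s, s ≤ N → ∀ y ∈ Set.Icc a b,
      iteratedDerivWithin s g (Set.Icc a b) y = iteratedDeriv s g y := by
  intro s
  induction s with
  | zero => intro _ y _; simp
  | succ n ih =>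
    intro hs y hy
    have hu := uniqueDiffOn_Icc hab
    rw [iteratedDerivWithin_succ, iteratedDeriv_succ]
    rw [derivWithin_congr (fun z hz => ih (by omega) z hz) (ih (by omega) y hy)]
    refine ((hg.differentiable_iteratedDeriv n ?_) y).derivWithin (hu y hy)
    exact_mod_cast (by omega : n < N)

private lemma aux_iter_derivative_add (s : ℕ) (p q : Polynomial ℝ) :
    (⇑Polynomial.derivative)^[s] (p + q) =
      (⇑Polynomial.derivative)^[s] p + (⇑Polynomial.derivative)^[s] q := by
  induction s generalizing p q with
  | zero => rfl
  | succ n ih =>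
    rw [Function.iterate_succ_apply, Function.iterate_succ_apply, Function.iterate_succ_apply,
      Polynomial.derivative_add, ih]

set_option maxHeartbeats 1000000 in
/-- Sampling a `C^{M+1}` function on `M+1` uniform nodes yields `M` degrees of discrete
smoothness: the discrete derivatives of the Lagrange interpolant at the nodes are
bounded uniformly in the node spacing `h`. -/
theorem stmt_15 (M : ℕ) (t0 : ℝ) (g : ℝ → ℝ)
    (hg : ContDiff ℝ (M + 1 : ℕ) g)
    (K : ℝ) (hK : ∀ s ≤ M + 1, ∀ t : ℝ, |iteratedDeriv s g t| ≤ K) :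
    ∃ C : ℝ, ∀ h : ℝ, 0 < h → h ≤ 1 → ∀ s ≤ M, ∀ m : Fin (M + 1),
      |deriv^[s] (fun t => ∑ j : Fin (M + 1),
          (∏ n ∈ univ.erase j, (t - (t0 + (n : ℕ) * h)) /
            ((t0 + (j : ℕ) * h) - (t0 + (n : ℕ) * h))) * g (t0 + (j : ℕ) * h))
        (t0 + (m : ℕ) * h)| ≤ C := by
  classical
  set w : Fin (M + 1) → ℝ := fun j => ((j : ℕ) : ℝ) with hw_def
  have hw : Set.InjOn w ↑(Finset.univ : Finset (Fin (M + 1))) := by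
    intro i _ j _ hij
    simp only [hw_def] at hij
    have : (i : ℕ) = (j : ℕ) := by exact_mod_cast hij
    exact Fin.ext this
  set A : ℝ := ∑ s ∈ Finset.range (M + 1), ∑ m : Fin (M + 1), ∑ j : Fin (M + 1),
      |((⇑Polynomial.derivative)^[s] (Lagrange.basis Finset.univ w j)).eval (((m : ℕ) : ℝ))|
    with hA_def
  have hA0 : 0 ≤ A := by positivity
  have hK0 : 0 ≤ K := le_trans (abs_nonneg (g t0)) (by simpa using hK 0 (by omega) t0)
  refine ⟨K * ((M : ℝ) + 1) ^ (M + 1) * A + K, ?_⟩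
  intro h hh0 hh1 s hs m
  have hhne : h ≠ 0 := ne_of_gt hh0
  set v : Fin (M + 1) → ℝ := fun j => t0 + ((j : ℕ) : ℝ) * h with hv_def
  have hv : Set.InjOn v ↑(Finset.univ : Finset (Fin (M + 1))) := by
    intro i _ j _ hij
    simp only [hv_def] at hij
    have h2 : ((i : ℕ) : ℝ) * h = ((j : ℕ) : ℝ) * h := by linarith
    have : ((i : ℕ) : ℝ) = ((j : ℕ) : ℝ) := mul_right_cancel₀ hhne h2
    exact Fin.ext (by exact_mod_cast this)
  set ψ : Fin (M + 1) → ℝ := fun j => g (v j) with hψ_def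
  set q : Polynomial ℝ := Lagrange.interpolate Finset.univ w ψ with hq_def
  have hcard : (Finset.univ : Finset (Fin (M + 1))).card = M + 1 := by simp
  -- the function in the statement is the evaluation of the Lagrange interpolant
  have hfun : (fun t => ∑ j : Fin (M + 1),
          (∏ n ∈ univ.erase j, (t - (t0 + (n : ℕ) * h)) /
            ((t0 + (j : ℕ) * h) - (t0 + (n : ℕ) * h))) * g (t0 + (j : ℕ) * h))
      = fun t => (Lagrange.interpolate Finset.univ v ψ).eval t := by
    funext t
    rw [Lagrange.interpolate_apply, Polynomial.eval_finset_sum]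
    refine Finset.sum_congr rfl fun j _ => ?_
    simp only [Lagrange.basis, Lagrange.basisDivisor, Polynomial.eval_mul, Polynomial.eval_C,
      Polynomial.eval_prod, Polynomial.eval_sub, Polynomial.eval_X, hψ_def, hv_def]
    rw [mul_comm]
    congr 1
    refine Finset.prod_congr rfl fun n _ => ?_
    rw [div_eq_mul_inv, mul_comm]
  -- degree of the integer-node interpolant
  have hdeg_q : q.natDegree < M + 1 := by
    by_cases hq0 : q = 0
    · simp [hq0]
    · have hdq := Lagrange.degree_interpolate_lt ψ hw
      rw [hcard] at hdq
      exact (Polynomial.natDegree_lt_iff_degree_lt hq0).mpr hdq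
  have hlv : ∀ j : Fin (M + 1),
      (Polynomial.C h⁻¹ * (Polynomial.X - Polynomial.C t0)).eval (v j) = ((j : ℕ) : ℝ) := by
    intro j
    simp only [Polynomial.eval_mul, Polynomial.eval_C, Polynomial.eval_sub, Polynomial.eval_X,
      hv_def]
    field_simp
    ring
  have hcomp : Lagrange.interpolate Finset.univ v ψ =
      q.comp (Polynomial.C h⁻¹ * (Polynomial.X - Polynomial.C t0)) := by
    refine (Lagrange.eq_interpolate_of_eval_eq (r := ψ) hv ?_ ?_).symm
    · refine lt_of_le_of_lt Polynomial.degree_le_natDegree ?_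
      rw [Polynomial.natDegree_comp, Polynomial.natDegree_C_mul (inv_ne_zero hhne),
        Polynomial.natDegree_X_sub_C, mul_one, hcard]
      exact_mod_cast hdeg_q
    · intro i _
      rw [Polynomial.eval_comp, hlv i]
      have : ((i : ℕ) : ℝ) = w i := rfl
      rw [this]
      exact Lagrange.eval_interpolate_at_node ψ hw (Finset.mem_univ i)
  have key : deriv^[s] (fun t => ∑ j : Fin (M + 1),
          (∏ n ∈ univ.erase j, (t - (t0 + (n : ℕ) * h)) /
            ((t0 + (j : ℕ) * h) - (t0 + (n : ℕ) * h))) * g (t0 + (j : ℕ) * h))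
        (t0 + (m : ℕ) * h)
      = h⁻¹ ^ s * ((⇑Polynomial.derivative)^[s] q).eval ((m : ℕ) : ℝ) := by
    rw [hfun, aux_iter_deriv_polyeval', hcomp, aux_iter_derivative_comp]
    have hvm : (t0 + ((m : ℕ) : ℝ) * h) = v m := rfl
    rw [Polynomial.eval_mul, Polynomial.eval_C, Polynomial.eval_comp, hvm, hlv m]
  rw [key]
  rcases Nat.eq_zero_or_pos s with hs0 | hspos
  · subst hs0
    simp only [pow_zero, one_mul, Function.iterate_zero, id]
    have hwm : ((m : ℕ) : ℝ) = w m := rfl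
    rw [hwm, Lagrange.eval_interpolate_at_node ψ hw (Finset.mem_univ m)]
    have hb := hK 0 (by omega) (v m)
    simp only [iteratedDeriv_zero] at hb
    have hψm : |ψ m| ≤ K := hb
    have hpos : 0 ≤ K * ((M : ℝ) + 1) ^ (M + 1) * A := by positivity
    linarith
  · -- s ≥ 1, hence M ≥ 1
    obtain ⟨n, rfl⟩ : ∃ n, s = n + 1 := ⟨s - 1, by omega⟩
    have hM1 : 1 ≤ M := by omega
    have hM1R : (1:ℝ) ≤ (M : ℝ) := by exact_mod_cast hM1
    set b : ℝ := t0 + (M : ℝ) * h with hb_def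
    have hab : t0 < b := by
      have : (0:ℝ) < (M : ℝ) * h := by positivity
      simp only [hb_def]; linarith
    -- Taylor polynomial of degree n
    set P : Polynomial ℝ := ∑ k ∈ Finset.range (n + 1),
        Polynomial.C (iteratedDerivWithin k g (Set.Icc t0 b) t0 * ((Nat.factorial k : ℕ) : ℝ)⁻¹) *
          (Polynomial.X - Polynomial.C t0) ^ k with hP_def
    have hPdeg : P.natDegree < n + 1 := by
      have hle : P.natDegree ≤ n := by
        refine Polynomial.natDegree_sum_le_of_forall_le _ _ fun k hk => ?_
        refine le_trans (Polynomial.natDegree_C_mul_le _ _) ?_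
        rw [Polynomial.natDegree_pow, Polynomial.natDegree_X_sub_C, mul_one]
        exact Nat.lt_succ_iff.mp (Finset.mem_range.mp hk)
      omega
    -- remainder bound
    have hg_s : ContDiffOn ℝ ((n : ℕ∞) + 1) g (Set.Icc t0 b) := by
      refine (hg.of_le ?_).contDiffOn
      exact_mod_cast (by omega : n + 1 ≤ M + 1)
    have hC' : ∀ y ∈ Set.Icc t0 b, ‖iteratedDerivWithin (n + 1) g (Set.Icc t0 b) y‖ ≤ K := by
      intro y hy
      rw [Real.norm_eq_abs, aux_iterDW g (M + 1) hg hab (n + 1) (by omega) y hy]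
      exact hK (n + 1) (by omega) y
    have hmem : ∀ j : Fin (M + 1), v j ∈ Set.Icc t0 b := by
      intro j
      have hj : ((j : ℕ) : ℝ) ≤ (M : ℝ) := by
        exact_mod_cast Nat.lt_succ_iff.mp j.isLt
      have hj0 : (0:ℝ) ≤ ((j : ℕ) : ℝ) := Nat.cast_nonneg _
      constructor
      · simp only [hv_def]; nlinarith
      · simp only [hv_def, hb_def]; nlinarith
    have hρ : ∀ j : Fin (M + 1), |ψ j - P.eval (v j)| ≤ K * ((M : ℝ) * h) ^ (n + 1) := by
      intro j
      have htay := taylor_mean_remainder_bound (le_of_lt hab) hg_s (hmem j) hC'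
      rw [Real.norm_eq_abs] at htay
      have hPev : P.eval (v j) = taylorWithinEval g n (Set.Icc t0 b) t0 (v j) := by
        rw [hP_def]; exact aux_taylor_poly g (Set.Icc t0 b) t0 n (v j)
      rw [← hPev] at htay
      have hvj0 : 0 ≤ v j - t0 := by
        have := (hmem j).1; linarith
      have h1 : (v j - t0) ^ (n + 1) ≤ ((M : ℝ) * h) ^ (n + 1) := by
        refine pow_le_pow_left₀ hvj0 ?_ _
        have := (hmem j).2
        simp only [hb_def] at this
        linarith
      refine le_trans htay (le_trans (div_le_self (by positivity) ?_)
        (mul_le_mul_of_nonneg_left h1 hK0))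
      exact_mod_cast Nat.one_le_iff_ne_zero.mpr n.factorial_ne_zero
    -- split the data into Taylor-polynomial part plus remainder
    set φ : Fin (M + 1) → ℝ := fun j => P.eval (v j) with hφ_def
    set ρ : Fin (M + 1) → ℝ := fun j => ψ j - φ j with hρ_def
    have hψsplit : ψ = φ + ρ := by
      funext j; simp [hρ_def]
    have hqsplit : q = Lagrange.interpolate Finset.univ w φ +
        Lagrange.interpolate Finset.univ w ρ := by
      rw [hq_def, hψsplit, map_add]
    -- the polynomial part contributes nothing to the s-th derivative
    have hIφ : Lagrange.interpolate Finset.univ w φ =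
        P.comp (Polynomial.C h * (Polynomial.X - Polynomial.C (-(t0 / h)))) := by
      refine (Lagrange.eq_interpolate_of_eval_eq (r := φ) hw ?_ ?_).symm
      · refine lt_of_le_of_lt Polynomial.degree_le_natDegree ?_
        rw [Polynomial.natDegree_comp, Polynomial.natDegree_C_mul hhne,
          Polynomial.natDegree_X_sub_C, mul_one, hcard]
        exact_mod_cast (by omega : P.natDegree < M + 1)
      · intro i _
        rw [Polynomial.eval_comp]
        simp only [Polynomial.eval_mul, Polynomial.eval_C, Polynomial.eval_sub,
          Polynomial.eval_X, hφ_def, hw_def, hv_def]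
        congr 1
        field_simp
        ring
    have hIφ0 : (⇑Polynomial.derivative)^[n + 1] (Lagrange.interpolate Finset.univ w φ) = 0 := by
      rw [hIφ]
      refine Polynomial.iterate_derivative_eq_zero ?_
      rw [Polynomial.natDegree_comp, Polynomial.natDegree_C_mul hhne,
        Polynomial.natDegree_X_sub_C, mul_one]
      exact hPdeg
    have hE : ((⇑Polynomial.derivative)^[n + 1] q).eval ((m : ℕ) : ℝ)
        = ∑ j : Fin (M + 1), ρ j *
            ((⇑Polynomial.derivative)^[n + 1] (Lagrange.basis Finset.univ w j)).eval
              ((m : ℕ) : ℝ) := by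
      rw [hqsplit, aux_iter_derivative_add, hIφ0, zero_add, Lagrange.interpolate_apply,
        Polynomial.iterate_derivative_sum]
      rw [Polynomial.eval_finset_sum]
      refine Finset.sum_congr rfl fun j _ => ?_
      rw [Polynomial.iterate_derivative_C_mul, Polynomial.eval_mul, Polynomial.eval_C]
    -- the slice of A corresponding to (n+1, m)
    have hslice : ∑ j : Fin (M + 1),
        |((⇑Polynomial.derivative)^[n + 1] (Lagrange.basis Finset.univ w j)).eval
          ((m : ℕ) : ℝ)| ≤ A := by
      rw [hA_def]
      calc ∑ j : Fin (M + 1),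
          |((⇑Polynomial.derivative)^[n + 1] (Lagrange.basis Finset.univ w j)).eval
            ((m : ℕ) : ℝ)|
          ≤ ∑ m' : Fin (M + 1), ∑ j : Fin (M + 1),
            |((⇑Polynomial.derivative)^[n + 1] (Lagrange.basis Finset.univ w j)).eval
              ((m' : ℕ) : ℝ)| := by
            refine Finset.single_le_sum (f := fun m' : Fin (M + 1) => ∑ j : Fin (M + 1),
              |((⇑Polynomial.derivative)^[n + 1] (Lagrange.basis Finset.univ w j)).eval
                ((m' : ℕ) : ℝ)|) (fun i _ => by positivity) (Finset.mem_univ m)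
        _ ≤ _ := by
            refine Finset.single_le_sum (f := fun s' => ∑ m' : Fin (M + 1), ∑ j : Fin (M + 1),
              |((⇑Polynomial.derivative)^[s'] (Lagrange.basis Finset.univ w j)).eval
                ((m' : ℕ) : ℝ)|) (fun i _ => by positivity) ?_
            exact Finset.mem_range.mpr (by omega)
    have hEbound : |((⇑Polynomial.derivative)^[n + 1] q).eval ((m : ℕ) : ℝ)|
        ≤ K * ((M : ℝ) * h) ^ (n + 1) * A := by
      rw [hE]
      refine le_trans (Finset.abs_sum_le_sum_abs _ _) ?_
      have step : ∀ j ∈ (Finset.univ : Finset (Fin (M + 1))),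
          |ρ j * ((⇑Polynomial.derivative)^[n + 1] (Lagrange.basis Finset.univ w j)).eval
            ((m : ℕ) : ℝ)|
          ≤ K * ((M : ℝ) * h) ^ (n + 1) *
            |((⇑Polynomial.derivative)^[n + 1] (Lagrange.basis Finset.univ w j)).eval
              ((m : ℕ) : ℝ)| := by
        intro j _
        rw [abs_mul]
        exact mul_le_mul_of_nonneg_right (hρ j) (abs_nonneg _)
      refine le_trans (Finset.sum_le_sum step) ?_
      rw [← Finset.mul_sum]
      exact mul_le_mul_of_nonneg_left hslice (by positivity)
    have hinv : (h⁻¹) ^ (n + 1) * h ^ (n + 1) = 1 := by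
      rw [← mul_pow, inv_mul_cancel₀ hhne, one_pow]
    have hMpow : ((M : ℝ)) ^ (n + 1) ≤ ((M : ℝ) + 1) ^ (M + 1) := by
      calc ((M : ℝ)) ^ (n + 1) ≤ ((M : ℝ) + 1) ^ (n + 1) :=
            pow_le_pow_left₀ (Nat.cast_nonneg M) (by linarith) _
        _ ≤ ((M : ℝ) + 1) ^ (M + 1) := by
            refine pow_le_pow_right₀ (by linarith) (by omega)
    clear_value A q P
    calc |h⁻¹ ^ (n + 1) * ((⇑Polynomial.derivative)^[n + 1] q).eval ((m : ℕ) : ℝ)|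
        = (h⁻¹) ^ (n + 1) * |((⇑Polynomial.derivative)^[n + 1] q).eval ((m : ℕ) : ℝ)| := by
          rw [abs_mul, abs_pow, abs_of_pos (inv_pos.mpr hh0)]
      _ ≤ (h⁻¹) ^ (n + 1) * (K * ((M : ℝ) * h) ^ (n + 1) * A) := by
          exact mul_le_mul_of_nonneg_left hEbound (by positivity)
      _ = K * ((M : ℝ)) ^ (n + 1) * A * ((h⁻¹) ^ (n + 1) * h ^ (n + 1)) := by
          rw [mul_pow]; ring
      _ = K * ((M : ℝ)) ^ (n + 1) * A := by rw [hinv, mul_one]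
      _ ≤ K * ((M : ℝ) + 1) ^ (M + 1) * A := by
          have := mul_le_mul_of_nonneg_left hMpow hK0
          nlinarith [mul_le_mul_of_nonneg_right (mul_le_mul_of_nonneg_left hMpow hK0) hA0]
      _ ≤ K * ((M : ℝ) + 1) ^ (M + 1) * A + K := by linarith
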